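/- For real a > 0 and reals α₁,...,αₘ > 0, the Dirichlet integral holds: ∫_{Δₐᵐ} x₁^{α₁−1} ⋯ xₘ^{αₘ−1} dx₁⋯dx_{m−1} = a^{α₁+⋯+αₘ−1} · ∏ᵢ Γ(αᵢ) / Γ(∑ᵢ αᵢ), where Δₐᵐ = {(x₁,...,xₘ) ∈ [0,∞)ᵐ : ∑ xᵢ = a} and the integration is over (x₁,...,x_{m−1}) ∈ {x ∈ [0,∞)^{m−1} : ∑ xᵢ ≤ a} with xₘ = a − ∑_{i<m} xᵢ. -/

import Mathlib

open MeasureTheory ENNReal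

lemma beta_real {p q a : ℝ} (hp : 0 < p) (hq : 0 < q) (ha : 0 < a) :
    ∫ t in (0:ℝ)..a, t ^ (p - 1) * (a - t) ^ (q - 1) =
      a ^ (p + q - 1) * (Real.Gamma p * Real.Gamma q / Real.Gamma (p + q)) := by
  have hp' : (0:ℝ) < Complex.re (p : ℂ) := by simpa using hp
  have hq' : (0:ℝ) < Complex.re (q : ℂ) := by simpa using hq
  have hβ := Complex.Gamma_mul_Gamma_eq_betaIntegral hp' hq'
  have hs := Complex.betaIntegral_scaled (p : ℂ) (q : ℂ) ha
  have hG : Complex.Gamma ((p:ℂ) + q) ≠ 0 := by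
    rw [← Complex.ofReal_add]
    simp only [Complex.Gamma_ofReal, ne_eq, Complex.ofReal_eq_zero]
    exact (Real.Gamma_pos_of_pos (by linarith)).ne'
  have hbeta : Complex.betaIntegral p q =
      ((Real.Gamma p * Real.Gamma q / Real.Gamma (p + q) : ℝ) : ℂ) := by
    rw [show Complex.betaIntegral p q
        = Complex.Gamma ((p:ℂ)+q) * Complex.betaIntegral p q / Complex.Gamma ((p:ℂ)+q)
        from (mul_div_cancel_left₀ _ hG).symm, ← hβ,
      show ((p:ℂ)+q) = ((p+q:ℝ):ℂ) by push_cast; ring,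
      Complex.Gamma_ofReal, Complex.Gamma_ofReal, Complex.Gamma_ofReal]
    push_cast
    ring
  have hL : (∫ x in (0:ℝ)..a, (x:ℂ) ^ ((p:ℂ) - 1) * ((a:ℂ) - x) ^ ((q:ℂ) - 1)) =
      ((∫ t in (0:ℝ)..a, t ^ (p - 1) * (a - t) ^ (q - 1) : ℝ) : ℂ) := by
    rw [← intervalIntegral.integral_ofReal]
    refine intervalIntegral.integral_congr fun x hx => ?_
    rw [Set.uIcc_of_le ha.le] at hx
    have hx0 : (0:ℝ) ≤ x := hx.1
    have hax : (0:ℝ) ≤ a - x := by linarith [hx.2]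
    rw [show ((p:ℂ)-1) = ((p-1:ℝ):ℂ) by push_cast; ring,
      show ((q:ℂ)-1) = ((q-1:ℝ):ℂ) by push_cast; ring,
      show ((a:ℂ)-(x:ℂ)) = ((a-x:ℝ):ℂ) by push_cast; ring,
      ← Complex.ofReal_cpow hx0, ← Complex.ofReal_cpow hax]
    push_cast
    ring
  have hR : ((a:ℂ)) ^ ((p:ℂ) + q - 1) = ((a ^ (p + q - 1) : ℝ) : ℂ) := by
    rw [show ((p:ℂ)+q-1) = ((p+q-1:ℝ):ℂ) by push_cast; ring, ← Complex.ofReal_cpow ha.le]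
  rw [hL, hbeta, hR] at hs
  exact_mod_cast hs

lemma beta_lint {p q a : ℝ} (hp : 0 < p) (hq : 0 < q) (ha : 0 < a) :
    ∫⁻ t in Set.Ioo (0:ℝ) a, ENNReal.ofReal (t ^ (p - 1) * (a - t) ^ (q - 1)) =
      ENNReal.ofReal (a ^ (p + q - 1) * (Real.Gamma p * Real.Gamma q / Real.Gamma (p + q))) := by
  set V : ℝ := a ^ (p + q - 1) * (Real.Gamma p * Real.Gamma q / Real.Gamma (p + q)) with hV
  have hVpos : 0 < V := by
    apply mul_pos (Real.rpow_pos_of_pos ha _)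
    exact div_pos (mul_pos (Real.Gamma_pos_of_pos hp) (Real.Gamma_pos_of_pos hq))
      (Real.Gamma_pos_of_pos (by linarith))
  have hI : (∫ t in Set.Ioo (0:ℝ) a, t ^ (p - 1) * (a - t) ^ (q - 1)) = V := by
    rw [← MeasureTheory.integral_Ioc_eq_integral_Ioo, ← intervalIntegral.integral_of_le ha.le]
    exact beta_real hp hq ha
  have hmeas : Measurable fun t : ℝ => t ^ (p - 1) * (a - t) ^ (q - 1) := by fun_prop
  have hnn : 0 ≤ᵐ[volume.restrict (Set.Ioo (0:ℝ) a)]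
      fun t : ℝ => t ^ (p - 1) * (a - t) ^ (q - 1) := by
    refine (ae_restrict_iff' measurableSet_Ioo).2 (ae_of_all _ fun t ht => ?_)
    exact mul_nonneg (Real.rpow_nonneg ht.1.le _) (Real.rpow_nonneg (by linarith [ht.2]) _)
  have h2 := integral_eq_lintegral_of_nonneg_ae hnn hmeas.aestronglyMeasurable.restrict
  rw [hI] at h2
  have hne : (∫⁻ t in Set.Ioo (0:ℝ) a, ENNReal.ofReal (t ^ (p - 1) * (a - t) ^ (q - 1))) ≠ ⊤ := by
    intro h
    rw [h, ENNReal.toReal_top] at h2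
    exact hVpos.ne' h2
  rw [← ENNReal.ofReal_toReal hne, ← h2]

lemma meas_integrand (n : ℕ) (a : ℝ) (α : Fin (n + 1) → ℝ) :
    Measurable (fun x : Fin n → ℝ =>
      (∏ i : Fin n, x i ^ (α i.castSucc - 1)) * (a - ∑ i, x i) ^ (α (Fin.last n) - 1)) := by
  fun_prop

lemma meas_set (n : ℕ) (a : ℝ) :
    MeasurableSet {x : Fin n → ℝ | (∀ i, 0 ≤ x i) ∧ ∑ i, x i ≤ a} := by
  have : {x : Fin n → ℝ | (∀ i, 0 ≤ x i) ∧ ∑ i, x i ≤ a}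
      = (⋂ i, {x : Fin n → ℝ | 0 ≤ x i}) ∩ {x : Fin n → ℝ | ∑ i, x i ≤ a} := by
    ext x; simp [Set.mem_iInter]
  rw [this]
  exact (MeasurableSet.iInter fun i =>
      measurableSet_le measurable_const (measurable_pi_apply i)).inter
    (measurableSet_le (by fun_prop) measurable_const)

lemma dirichlet_lint (n : ℕ) : ∀ (a : ℝ), 0 < a → ∀ (α : Fin (n + 1) → ℝ), (∀ i, 0 < α i) →
    (∫⁻ x in {x : Fin n → ℝ | (∀ i, 0 ≤ x i) ∧ ∑ i, x i ≤ a},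
        ENNReal.ofReal ((∏ i : Fin n, x i ^ (α i.castSucc - 1)) *
          (a - ∑ i, x i) ^ (α (Fin.last n) - 1))) =
    ENNReal.ofReal (a ^ ((∑ i, α i) - 1) * (∏ i, Real.Gamma (α i)) / Real.Gamma (∑ i, α i)) := by
  induction n with
  | zero =>
    intro a ha α hα
    have h0 : Real.Gamma (α 0) ≠ 0 := (Real.Gamma_pos_of_pos (hα 0)).ne'
    have hset : {x : Fin 0 → ℝ | (∀ i, 0 ≤ x i) ∧ ∑ i, x i ≤ a} = Set.univ := by
      ext x
      simp [ha.le]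
    rw [hset, Measure.restrict_univ]
    simp only [Finset.univ_eq_empty, Finset.prod_empty, Finset.sum_empty, one_mul, sub_zero]
    rw [lintegral_const, (by simp [volume_pi] : (volume : Measure (Fin 0 → ℝ)) Set.univ = 1),
      mul_one]
    congr 1
    rw [Fin.sum_univ_succ, Fin.prod_univ_succ]
    simp only [Finset.univ_eq_empty, Finset.prod_empty, Finset.sum_empty, mul_one, add_zero]
    rw [show Fin.last 0 = 0 from rfl, mul_div_assoc, div_self h0, mul_one]
  | succ n IH =>
    intro a ha α hα
    set p : ℝ := α 0 with hp
    set β : Fin (n + 1) → ℝ := fun j => α j.succ with hβdef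
    have hβ : ∀ j, 0 < β j := fun j => hα _
    set q : ℝ := ∑ j, β j with hqdef
    have hq0 : 0 < q := Finset.sum_pos (fun j _ => hβ j) Finset.univ_nonempty
    have hΓq : Real.Gamma q ≠ 0 := (Real.Gamma_pos_of_pos hq0).ne'
    have hΓpq : Real.Gamma (p + q) ≠ 0 :=
      (Real.Gamma_pos_of_pos (by have := hα 0; positivity)).ne'
    set C : ℝ := (∏ j, Real.Gamma (β j)) / Real.Gamma q with hCdef
    have hC0 : 0 ≤ C := div_nonneg
      (Finset.prod_nonneg fun j _ => (Real.Gamma_pos_of_pos (hβ j)).le)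
      (Real.Gamma_pos_of_pos hq0).le
    set F : (Fin (n + 1) → ℝ) → ℝ≥0∞ := fun x => ENNReal.ofReal
      ((∏ i : Fin (n + 1), x i ^ (α i.castSucc - 1)) *
        (a - ∑ i, x i) ^ (α (Fin.last (n + 1)) - 1)) with hFdef
    set S : Set (Fin (n + 1) → ℝ) := {x | (∀ i, 0 ≤ x i) ∧ ∑ i, x i ≤ a} with hSdef
    have hGmeas : Measurable (S.indicator F) :=
      (ENNReal.measurable_ofReal.comp (meas_integrand (n + 1) a α)).indicator
        (meas_set (n + 1) a)
    have hmp := (measurePreserving_piFinSuccAbove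
      (fun _ : Fin (n + 1) => (volume : Measure ℝ)) 0).symm
    have step1 : (∫⁻ x in S, F x) = ∫⁻ z : ℝ × (Fin n → ℝ),
        S.indicator F ((MeasurableEquiv.piFinSuccAbove (fun _ : Fin (n + 1) => ℝ) 0).symm z)
        ∂((volume : Measure ℝ).prod (Measure.pi fun _ : Fin n => volume)) := by
      rw [← lintegral_indicator (meas_set (n + 1) a) F,
        show (volume : Measure (Fin (n + 1) → ℝ)) = Measure.pi fun _ => volume from volume_pi,
        ← hmp.lintegral_comp hGmeas]
    have hsymm : ∀ (t : ℝ) (y : Fin n → ℝ),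
        (MeasurableEquiv.piFinSuccAbove (fun _ : Fin (n + 1) => ℝ) 0).symm (t, y)
          = Fin.cons t y := by
      intro t y
      ext i
      refine Fin.cases ?_ ?_ i
      · simp [MeasurableEquiv.piFinSuccAbove_symm_apply, Fin.insertNthEquiv, Fin.insertNth_zero]
      · intro j
        simp [MeasurableEquiv.piFinSuccAbove_symm_apply, Fin.insertNthEquiv, Fin.insertNth_zero]
    have step2 : (∫⁻ z : ℝ × (Fin n → ℝ),
        S.indicator F ((MeasurableEquiv.piFinSuccAbove (fun _ : Fin (n + 1) => ℝ) 0).symm z)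
        ∂((volume : Measure ℝ).prod (Measure.pi fun _ : Fin n => volume)))
        = ∫⁻ t : ℝ, ∫⁻ y : Fin n → ℝ, S.indicator F (Fin.cons t y)
          ∂(Measure.pi fun _ : Fin n => volume) ∂volume := by
      have hzm : Measurable fun z : ℝ × (Fin n → ℝ) =>
          S.indicator F ((MeasurableEquiv.piFinSuccAbove (fun _ : Fin (n + 1) => ℝ) 0).symm z) :=
        hGmeas.comp (MeasurableEquiv.measurable _)
      rw [lintegral_prod _ hzm.aemeasurable]
      simp_rw [hsymm]
    have key : ∀ t : ℝ, t ≠ 0 → t ≠ a →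
        (∫⁻ y : Fin n → ℝ, S.indicator F (Fin.cons t y) ∂(Measure.pi fun _ : Fin n => volume))
        = (Set.Ioo (0:ℝ) a).indicator
            (fun t => ENNReal.ofReal (t ^ (p - 1) * (a - t) ^ (q - 1)) * ENNReal.ofReal C) t := by
      intro t ht0 hta
      by_cases ht : t ∈ Set.Ioo (0:ℝ) a
      · rw [Set.indicator_of_mem ht]
        have hat : 0 < a - t := by have := ht.2; simp only [Set.mem_Ioo] at ht; linarith [ht.2]
        have hconsmem : ∀ y : Fin n → ℝ,
            (Fin.cons t y ∈ S) ↔ ((∀ j, 0 ≤ y j) ∧ ∑ j, y j ≤ a - t) := by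
          intro y
          constructor
          · intro h
            refine ⟨fun j => by simpa using h.1 j.succ, ?_⟩
            have h2 := h.2
            rw [Fin.sum_cons] at h2
            linarith
          · intro h
            refine ⟨fun i => ?_, ?_⟩
            · refine Fin.cases ?_ ?_ i
              · simpa using ht.1.le
              · intro j; simpa using h.1 j
            · rw [Fin.sum_cons]; linarith [h.2]
        have hFcons : ∀ y : Fin n → ℝ, F (Fin.cons t y) = ENNReal.ofReal (t ^ (p - 1)) *
            ENNReal.ofReal ((∏ j : Fin n, y j ^ (β j.castSucc - 1)) *
              ((a - t) - ∑ j, y j) ^ (β (Fin.last n) - 1)) := by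
          intro y
          simp only [hFdef]
          rw [← ENNReal.ofReal_mul (Real.rpow_nonneg ht.1.le _)]
          congr 1
          rw [Fin.prod_univ_succ, Fin.sum_cons]
          simp only [Fin.cons_zero, Fin.cons_succ, Fin.castSucc_zero, hβdef,
            Fin.succ_castSucc, Fin.succ_last]
          rw [show a - (t + ∑ j, y j) = (a - t) - ∑ j, y j by ring]
          ring
        have hmeasF' : Measurable fun y : Fin n → ℝ =>
            ({y : Fin n → ℝ | (∀ j, 0 ≤ y j) ∧ ∑ j, y j ≤ a - t}.indicator
              (fun y => ENNReal.ofReal ((∏ j : Fin n, y j ^ (β j.castSucc - 1)) *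
                ((a - t) - ∑ j, y j) ^ (β (Fin.last n) - 1)))) y :=
          (ENNReal.measurable_ofReal.comp (meas_integrand n (a - t) β)).indicator
            (meas_set n (a - t))
        calc (∫⁻ y : Fin n → ℝ, S.indicator F (Fin.cons t y) ∂(Measure.pi fun _ : Fin n => volume))
            = ∫⁻ y : Fin n → ℝ, ENNReal.ofReal (t ^ (p - 1)) *
                ({y : Fin n → ℝ | (∀ j, 0 ≤ y j) ∧ ∑ j, y j ≤ a - t}.indicator
                  (fun y => ENNReal.ofReal ((∏ j : Fin n, y j ^ (β j.castSucc - 1)) *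
                    ((a - t) - ∑ j, y j) ^ (β (Fin.last n) - 1)))) y
                ∂(Measure.pi fun _ : Fin n => volume) := by
              refine lintegral_congr fun y => ?_
              by_cases hy : y ∈ {y : Fin n → ℝ | (∀ j, 0 ≤ y j) ∧ ∑ j, y j ≤ a - t}
              · rw [Set.indicator_of_mem ((hconsmem y).2 hy), Set.indicator_of_mem hy, hFcons]
              · rw [Set.indicator_of_notMem (fun h => hy ((hconsmem y).1 h)),
                  Set.indicator_of_notMem hy, mul_zero]
          _ = ENNReal.ofReal (t ^ (p - 1)) *
              ∫⁻ y : Fin n → ℝ in {y : Fin n → ℝ | (∀ j, 0 ≤ y j) ∧ ∑ j, y j ≤ a - t},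
                ENNReal.ofReal ((∏ j : Fin n, y j ^ (β j.castSucc - 1)) *
                  ((a - t) - ∑ j, y j) ^ (β (Fin.last n) - 1))
                ∂(Measure.pi fun _ : Fin n => volume) := by
              rw [lintegral_const_mul _ hmeasF', lintegral_indicator (meas_set n (a - t))]
          _ = ENNReal.ofReal (t ^ (p - 1)) *
              ENNReal.ofReal ((a - t) ^ (q - 1) * (∏ j, Real.Gamma (β j)) / Real.Gamma q) := by
              rw [show (Measure.pi fun _ : Fin n => (volume : Measure ℝ))
                  = (volume : Measure (Fin n → ℝ)) from volume_pi.symm]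
              rw [IH (a - t) hat β hβ, hqdef]
          _ = ENNReal.ofReal (t ^ (p - 1) * (a - t) ^ (q - 1)) * ENNReal.ofReal C := by
              rw [hCdef, ← ENNReal.ofReal_mul (Real.rpow_nonneg ht.1.le _),
                ← ENNReal.ofReal_mul (mul_nonneg (Real.rpow_nonneg ht.1.le _)
                  (Real.rpow_nonneg hat.le _))]
              congr 1
              field_simp
      · rw [Set.indicator_of_notMem ht]
        have hz : ∀ y : Fin n → ℝ, S.indicator F (Fin.cons t y) = 0 := by
          intro y
          apply Set.indicator_of_notMem
          intro hmem
          have h0t : 0 ≤ t := by simpa using hmem.1 0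
          have hsum := hmem.2
          rw [Fin.sum_cons] at hsum
          have hyn : 0 ≤ ∑ j, y j := Finset.sum_nonneg fun j _ => by simpa using hmem.1 j.succ
          exact ht ⟨lt_of_le_of_ne h0t (Ne.symm ht0), lt_of_le_of_ne (by linarith) hta⟩
        simp [hz]
    have h0ae : ∀ᵐ t : ℝ ∂volume, t ≠ 0 := by
      have h : {t : ℝ | ¬ t ≠ 0} = {0} := by ext t; simp
      rw [ae_iff, h]
      exact measure_singleton 0
    have haae : ∀ᵐ t : ℝ ∂volume, t ≠ a := by
      have h : {t : ℝ | ¬ t ≠ a} = {a} := by ext t; simp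
      rw [ae_iff, h]
      exact measure_singleton a
    have step3 : (∫⁻ t : ℝ, ∫⁻ y : Fin n → ℝ, S.indicator F (Fin.cons t y)
          ∂(Measure.pi fun _ : Fin n => volume) ∂volume)
        = ∫⁻ t : ℝ, (Set.Ioo (0:ℝ) a).indicator
            (fun t => ENNReal.ofReal (t ^ (p - 1) * (a - t) ^ (q - 1)) * ENNReal.ofReal C) t
          ∂volume := by
      refine lintegral_congr_ae ?_
      filter_upwards [h0ae, haae] with t ht0 hta using key t ht0 hta
    have hbmeas : Measurable fun t : ℝ => ENNReal.ofReal (t ^ (p - 1) * (a - t) ^ (q - 1)) := by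
      fun_prop
    have hsum2 : (∑ i, α i) = p + q := by
      rw [Fin.sum_univ_succ, hqdef, hβdef, hp]
    have hprod2 : (∏ i, Real.Gamma (α i)) = Real.Gamma p * ∏ j, Real.Gamma (β j) := by
      rw [Fin.prod_univ_succ, hβdef, hp]
    have hVnn : 0 ≤ a ^ (p + q - 1) * (Real.Gamma p * Real.Gamma q / Real.Gamma (p + q)) := by
      have := hα 0
      positivity
    rw [step1, step2, step3, lintegral_indicator measurableSet_Ioo,
      lintegral_mul_const _ hbmeas, beta_lint (hα 0) hq0 ha,
      ← ENNReal.ofReal_mul hVnn]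
    congr 1
    rw [hsum2, hprod2, hCdef]
    field_simp

theorem stmt_14 (n : ℕ) (a : ℝ) (ha : 0 < a) (α : Fin (n + 1) → ℝ) (hα : ∀ i, 0 < α i) :
    (∫ x in {x : Fin n → ℝ | (∀ i, 0 ≤ x i) ∧ ∑ i, x i ≤ a},
        (∏ i : Fin n, x i ^ (α i.castSucc - 1)) * (a - ∑ i, x i) ^ (α (Fin.last n) - 1)) =
    a ^ ((∑ i, α i) - 1) * (∏ i, Real.Gamma (α i)) / Real.Gamma (∑ i, α i) := by
  have hS := meas_set n a
  have hnn : 0 ≤ᵐ[volume.restrict {x : Fin n → ℝ | (∀ i, 0 ≤ x i) ∧ ∑ i, x i ≤ a}]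
      fun x : Fin n → ℝ =>
        (∏ i : Fin n, x i ^ (α i.castSucc - 1)) * (a - ∑ i, x i) ^ (α (Fin.last n) - 1) := by
    refine (ae_restrict_iff' hS).2 (ae_of_all _ fun x hx => ?_)
    exact mul_nonneg (Finset.prod_nonneg fun i _ => Real.rpow_nonneg (hx.1 i) _)
      (Real.rpow_nonneg (sub_nonneg.2 hx.2) _)
  have hRHS : 0 ≤ a ^ ((∑ i, α i) - 1) * (∏ i, Real.Gamma (α i)) / Real.Gamma (∑ i, α i) := by
    refine div_nonneg (mul_nonneg (Real.rpow_nonneg ha.le _)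
      (Finset.prod_nonneg fun i _ => (Real.Gamma_pos_of_pos (hα i)).le)) ?_
    exact (Real.Gamma_pos_of_pos (Finset.sum_pos (fun i _ => hα i) Finset.univ_nonempty)).le
  rw [integral_eq_lintegral_of_nonneg_ae hnn
      (meas_integrand n a α).aestronglyMeasurable.restrict,
    dirichlet_lint n a ha α hα, ENNReal.toReal_ofReal hRHS]
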